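/- arXiv:1210.2775 — 6 statements merged into one kernel-verified Lean document; each statement's English description precedes it below -/
import Mathlib

section
/- If D₁ and D₂ are dimension types, then the function D₁ ⊞ D₂ : σ → ℕ is again a dimension type, i.e. for every prime p it is p-regular, p⁺-singular or p⁻-singular. -/
/-- The Bockstein index set σ: the symbol ℚ together with, for every prime `p`,
the symbols ℤ_p, ℤ_{p^∞} and ℤ_{(p)}. -/
inductive Bock : Type
  | Q : Bock
  | Zp (p : Nat.Primes) : Bock
  | ZpInf (p : Nat.Primes) : Bock
  | Zloc (p : Nat.Primes) : Bock

/-- `D` is `p`-regular: `D(ℤ_{(p)}) = D(ℤ_p) = D(ℤ_{p^∞}) = D(ℚ)`. -/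
def pRegular (D : Bock → ℕ) (p : Nat.Primes) : Prop :=
  D (.Zloc p) = D (.Zp p) ∧ D (.Zp p) = D (.ZpInf p) ∧ D (.ZpInf p) = D .Q

/-- `D` is `p⁺`-singular: `D(ℤ_{p^∞}) = D(ℤ_p)` and
`D(ℤ_{(p)}) = max (D(ℚ)) (D(ℤ_{p^∞}) + 1)`. -/
def pPlusSingular (D : Bock → ℕ) (p : Nat.Primes) : Prop :=
  D (.ZpInf p) = D (.Zp p) ∧ D (.Zloc p) = max (D .Q) (D (.ZpInf p) + 1)

/-- `D` is `p⁻`-singular: `D(ℤ_p) ≥ 1`, `D(ℤ_{p^∞}) = D(ℤ_p) - 1` and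
`D(ℤ_{(p)}) = max (D(ℚ)) (D(ℤ_{p^∞}) + 1)`. -/
def pMinusSingular (D : Bock → ℕ) (p : Nat.Primes) : Prop :=
  1 ≤ D (.Zp p) ∧ D (.ZpInf p) = D (.Zp p) - 1 ∧
    D (.Zloc p) = max (D .Q) (D (.ZpInf p) + 1)

instance (D : Bock → ℕ) (p : Nat.Primes) : Decidable (pRegular D p) := by
  unfold pRegular; infer_instance

instance (D : Bock → ℕ) (p : Nat.Primes) : Decidable (pPlusSingular D p) := by
  unfold pPlusSingular; infer_instance

instance (D : Bock → ℕ) (p : Nat.Primes) : Decidable (pMinusSingular D p) := by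
  unfold pMinusSingular; infer_instance

/-- A dimension type: for every prime `p`, `D` is `p`-regular, `p⁺`-singular
or `p⁻`-singular. -/
def DimensionType (D : Bock → ℕ) : Prop :=
  ∀ p : Nat.Primes, pRegular D p ∨ pPlusSingular D p ∨ pMinusSingular D p

/-- The `p`-singularity sign ε of `D`: `+1` if `p⁺`-singular, `-1` if
`p⁻`-singular, `0` otherwise (i.e. `p`-regular, for dimension types). -/
def bsign (D : Bock → ℕ) (p : Nat.Primes) : ℤ :=
  if pPlusSingular D p then 1 else if pMinusSingular D p then -1 else 0

/-- The product of signs: `ε⊗0 = 0⊗ε = ε`, `ε⊗ε = ε`, `+⊗− = −⊗+ = −`. -/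
def signMul (a b : ℤ) : ℤ :=
  if a = 0 then b else if b = 0 then a else if a = b then a else -1

/-- The operation `D₁ ⊞ D₂` suggested by the Bockstein product theorem. -/
def boxplus (D₁ D₂ : Bock → ℕ) : Bock → ℕ := fun G =>
  match G with
  | .Q => D₁ .Q + D₂ .Q
  | .Zp p => D₁ (.Zp p) + D₂ (.Zp p)
  | .ZpInf p =>
      let e := signMul (bsign D₁ p) (bsign D₂ p)
      let q := D₁ .Q + D₂ .Q
      let s := D₁ (.Zp p) + D₂ (.Zp p)
      if e = 0 then q else if e = 1 then s else s - 1
  | .Zloc p =>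
      let e := signMul (bsign D₁ p) (bsign D₂ p)
      let q := D₁ .Q + D₂ .Q
      let s := D₁ (.Zp p) + D₂ (.Zp p)
      if e = 0 then q else if e = 1 then max q (s + 1) else max q s

/-- The involution `D ↦ D*` exchanging the decorations `+` and `−`. -/
def dual (D : Bock → ℕ) : Bock → ℕ := fun G =>
  match G with
  | .Q => D .Q
  | .Zp p => D (.Zp p)
  | .ZpInf p =>
      if pPlusSingular D p then D (.Zp p) - 1
      else if pMinusSingular D p then D (.Zp p)
      else D (.ZpInf p)
  | .Zloc p =>
      if pPlusSingular D p then max (D .Q) (D (.Zp p))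
      else if pMinusSingular D p then max (D .Q) (D (.Zp p) + 1)
      else D (.Zloc p)

/-- The operation `D₁ ⊕ D₂ = (D₁* ⊞ D₂*)*`. -/
def oplus (D₁ D₂ : Bock → ℕ) : Bock → ℕ :=
  dual (boxplus (dual D₁) (dual D₂))

/-- The pointwise order on functions `σ → ℕ`. -/
def dle (D D' : Bock → ℕ) : Prop := ∀ G, D G ≤ D' G

/-- `dim D = n`: `D(G) ≤ n` for every `G ∈ σ` and `D(G) = n` for some `G ∈ σ`. -/
def dimEq (D : Bock → ℕ) (n : ℕ) : Prop :=
  (∀ G, D G ≤ n) ∧ ∃ G, D G = n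


lemma reg_not_plus {D : Bock → ℕ} {p : Nat.Primes} (h : pRegular D p) :
    ¬ pPlusSingular D p := by
  obtain ⟨a, b, c⟩ := h; rintro ⟨d, e⟩; omega

lemma reg_not_minus {D : Bock → ℕ} {p : Nat.Primes} (h : pRegular D p) :
    ¬ pMinusSingular D p := by
  obtain ⟨a, b, c⟩ := h; rintro ⟨d, e, f⟩; omega

lemma plus_not_minus {D : Bock → ℕ} {p : Nat.Primes} (h : pPlusSingular D p) :
    ¬ pMinusSingular D p := by
  obtain ⟨a, b⟩ := h; rintro ⟨d, e, f⟩; omega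

lemma bsign_reg {D : Bock → ℕ} {p : Nat.Primes} (h : pRegular D p) :
    bsign D p = 0 := by
  simp [bsign, reg_not_plus h, reg_not_minus h]

lemma bsign_plus {D : Bock → ℕ} {p : Nat.Primes} (h : pPlusSingular D p) :
    bsign D p = 1 := by
  simp [bsign, h]

lemma bsign_minus {D : Bock → ℕ} {p : Nat.Primes} (h : pMinusSingular D p) :
    bsign D p = -1 := by
  simp [bsign, h, plus_not_minus]
  intro hp; exact absurd h (plus_not_minus hp)

/-- If D₁ and D₂ are dimension types, then D₁ ⊞ D₂ is again a
dimension type, i.e. for every prime p it is p-regular, p⁺-singular or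
p⁻-singular. -/
theorem boxplus_dimensionType (D₁ D₂ : Bock → ℕ)
    (h₁ : DimensionType D₁) (h₂ : DimensionType D₂) :
    DimensionType (boxplus D₁ D₂) := by
  intro p
  rcases h₁ p with r1 | p1 | m1 <;> rcases h₂ p with r2 | p2 | m2
  · have e1 := bsign_reg r1; have e2 := bsign_reg r2
    obtain ⟨a, b, c⟩ := r1; obtain ⟨d, e, f⟩ := r2
    refine Or.inl ⟨?_, ?_, ?_⟩ <;>
      simp [boxplus, signMul, pRegular, pPlusSingular, pMinusSingular, e1, e2] <;> omega
  · have e1 := bsign_reg r1; have e2 := bsign_plus p2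
    obtain ⟨a, b, c⟩ := r1; obtain ⟨d, e⟩ := p2
    refine Or.inr (Or.inl ⟨?_, ?_⟩) <;>
      simp [boxplus, signMul, pRegular, pPlusSingular, pMinusSingular, e1, e2] <;> omega
  · have e1 := bsign_reg r1; have e2 := bsign_minus m2
    obtain ⟨a, b, c⟩ := r1; obtain ⟨d, e, f⟩ := m2
    refine Or.inr (Or.inr ⟨?_, ?_, ?_⟩) <;>
      simp [boxplus, signMul, pRegular, pPlusSingular, pMinusSingular, e1, e2] <;> omega
  · have e1 := bsign_plus p1; have e2 := bsign_reg r2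
    obtain ⟨a, b⟩ := p1; obtain ⟨d, e, f⟩ := r2
    refine Or.inr (Or.inl ⟨?_, ?_⟩) <;>
      simp [boxplus, signMul, pRegular, pPlusSingular, pMinusSingular, e1, e2] <;> omega
  · have e1 := bsign_plus p1; have e2 := bsign_plus p2
    obtain ⟨a, b⟩ := p1; obtain ⟨d, e⟩ := p2
    refine Or.inr (Or.inl ⟨?_, ?_⟩) <;>
      simp [boxplus, signMul, pRegular, pPlusSingular, pMinusSingular, e1, e2] <;> omega
  · have e1 := bsign_plus p1; have e2 := bsign_minus m2
    obtain ⟨a, b⟩ := p1; obtain ⟨d, e, f⟩ := m2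
    refine Or.inr (Or.inr ⟨?_, ?_, ?_⟩) <;>
      simp [boxplus, signMul, pRegular, pPlusSingular, pMinusSingular, e1, e2] <;> omega
  · have e1 := bsign_minus m1; have e2 := bsign_reg r2
    obtain ⟨a, b, c⟩ := m1; obtain ⟨d, e, f⟩ := r2
    refine Or.inr (Or.inr ⟨?_, ?_, ?_⟩) <;>
      simp [boxplus, signMul, pRegular, pPlusSingular, pMinusSingular, e1, e2] <;> omega
  · have e1 := bsign_minus m1; have e2 := bsign_plus p2
    obtain ⟨a, b, c⟩ := m1; obtain ⟨d, e⟩ := p2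
    refine Or.inr (Or.inr ⟨?_, ?_, ?_⟩) <;>
      simp [boxplus, signMul, pRegular, pPlusSingular, pMinusSingular, e1, e2] <;> omega
  · have e1 := bsign_minus m1; have e2 := bsign_minus m2
    obtain ⟨a, b, c⟩ := m1; obtain ⟨d, e, f⟩ := m2
    refine Or.inr (Or.inr ⟨?_, ?_, ?_⟩) <;>
      simp [boxplus, signMul, pRegular, pPlusSingular, pMinusSingular, e1, e2] <;> omega
end

section
/- If D₁ and D₂ are dimension types, then D₁ ⊕ D₂ := (D₁* ⊞ D₂*)* is a dimension type. -/
lemma dual_status (D : Bock → ℕ) (p : Nat.Primes)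
    (h : pRegular D p ∨ pPlusSingular D p ∨ pMinusSingular D p) :
    (pRegular (dual D) p ∧ ¬ pPlusSingular (dual D) p ∧ ¬ pMinusSingular (dual D) p
        ∧ D .Q = D (.Zp p))
    ∨ pPlusSingular (dual D) p
    ∨ (pMinusSingular (dual D) p ∧ ¬ pPlusSingular (dual D) p ∧ 1 ≤ D (.Zp p)) := by
  have e0 : dual D .Q = D .Q := rfl
  have e3 : dual D (.Zp p) = D (.Zp p) := rfl
  rcases h with hr | hp | hm
  · have hnp : ¬ pPlusSingular D p := by
      unfold pRegular at hr; unfold pPlusSingular; omega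
    have hnm : ¬ pMinusSingular D p := by
      unfold pRegular at hr; unfold pMinusSingular; omega
    have e1 : dual D (.ZpInf p) = D (.ZpInf p) := by simp [dual, hnp, hnm]
    have e2 : dual D (.Zloc p) = D (.Zloc p) := by simp [dual, hnp, hnm]
    unfold pRegular at hr
    unfold pRegular pPlusSingular pMinusSingular
    rw [e0, e1, e2, e3]
    omega
  · have hnm : ¬ pMinusSingular D p := by
      unfold pPlusSingular at hp; unfold pMinusSingular; omega
    have e1 : dual D (.ZpInf p) = D (.Zp p) - 1 := by simp [dual, hp]
    have e2 : dual D (.Zloc p) = max (D .Q) (D (.Zp p)) := by simp [dual, hp]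
    unfold pPlusSingular at hp
    unfold pRegular pPlusSingular pMinusSingular
    rw [e0, e1, e2, e3]
    omega
  · have hnp : ¬ pPlusSingular D p := by
      unfold pMinusSingular at hm; unfold pPlusSingular; omega
    have e1 : dual D (.ZpInf p) = D (.Zp p) := by simp [dual, hnp, hm]
    have e2 : dual D (.Zloc p) = max (D .Q) (D (.Zp p) + 1) := by simp [dual, hnp, hm]
    unfold pMinusSingular at hm
    unfold pRegular pPlusSingular pMinusSingular
    rw [e0, e1, e2, e3]
    omega

lemma boxplus_at (E₁ E₂ : Bock → ℕ) (p : Nat.Primes)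
    (h : (bsign E₁ p = 0 ∧ E₁ .Q = E₁ (.Zp p)) ∨ bsign E₁ p = 1 ∨
        (bsign E₁ p = -1 ∧ 1 ≤ E₁ (.Zp p)))
    (h' : (bsign E₂ p = 0 ∧ E₂ .Q = E₂ (.Zp p)) ∨ bsign E₂ p = 1 ∨
        (bsign E₂ p = -1 ∧ 1 ≤ E₂ (.Zp p))) :
    pRegular (boxplus E₁ E₂) p ∨ pPlusSingular (boxplus E₁ E₂) p ∨
      pMinusSingular (boxplus E₁ E₂) p := by
  rcases h with ⟨hs, hq⟩ | hs | ⟨hs, hb⟩ <;>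
    rcases h' with ⟨hs', hq'⟩ | hs' | ⟨hs', hb'⟩ <;>
      simp only [pRegular, pPlusSingular, pMinusSingular, boxplus, hs, hs', signMul] <;>
      norm_num <;> omega

/-- If D₁ and D₂ are dimension types, then
D₁ ⊕ D₂ := (D₁* ⊞ D₂*)* is a dimension type. -/
theorem oplus_dimensionType (D₁ D₂ : Bock → ℕ)
    (h₁ : DimensionType D₁) (h₂ : DimensionType D₂) :
    DimensionType (oplus D₁ D₂) := by
  intro p
  have c1 := dual_status D₁ p (h₁ p)
  have c2 := dual_status D₂ p (h₂ p)
  have s1 : (bsign (dual D₁) p = 0 ∧ dual D₁ .Q = dual D₁ (.Zp p)) ∨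
      bsign (dual D₁) p = 1 ∨ (bsign (dual D₁) p = -1 ∧ 1 ≤ dual D₁ (.Zp p)) := by
    rcases c1 with ⟨_, hnp, hnm, hq⟩ | hp | ⟨hm, hnp, hb⟩
    · exact Or.inl ⟨by simp [bsign, hnp, hnm], hq⟩
    · exact Or.inr (Or.inl (by simp [bsign, hp]))
    · exact Or.inr (Or.inr ⟨by simp [bsign, hnp, hm], hb⟩)
  have s2 : (bsign (dual D₂) p = 0 ∧ dual D₂ .Q = dual D₂ (.Zp p)) ∨
      bsign (dual D₂) p = 1 ∨ (bsign (dual D₂) p = -1 ∧ 1 ≤ dual D₂ (.Zp p)) := by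
    rcases c2 with ⟨_, hnp, hnm, hq⟩ | hp | ⟨hm, hnp, hb⟩
    · exact Or.inl ⟨by simp [bsign, hnp, hnm], hq⟩
    · exact Or.inr (Or.inl (by simp [bsign, hp]))
    · exact Or.inr (Or.inr ⟨by simp [bsign, hnp, hm], hb⟩)
  have hB := boxplus_at (dual D₁) (dual D₂) p s1 s2
  rcases dual_status (boxplus (dual D₁) (dual D₂)) p hB with ⟨h, _⟩ | h | ⟨h, _⟩
  · exact Or.inl h
  · exact Or.inr (Or.inl h)
  · exact Or.inr (Or.inr h)
end

section
/- If D₁, D₁', D₂, D₂' are dimension types with D₁ ≤ D₁' and D₂ ≤ D₂', then D₁ ⊞ D₂ ≤ D₁' ⊞ D₂'. -/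
lemma bsign_spec (D : Bock → ℕ) (hD : DimensionType D) (p : Nat.Primes) :
    (bsign D p = 0 ∧ D (.Zloc p) = D (.Zp p) ∧ D (.Zp p) = D (.ZpInf p) ∧
      D (.ZpInf p) = D .Q)
  ∨ (bsign D p = 1 ∧ D (.ZpInf p) = D (.Zp p) ∧
      D (.Zloc p) = max (D .Q) (D (.ZpInf p) + 1))
  ∨ (bsign D p = -1 ∧ 1 ≤ D (.Zp p) ∧ D (.ZpInf p) = D (.Zp p) - 1 ∧
      D (.Zloc p) = max (D .Q) (D (.ZpInf p) + 1)) := by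
  rcases hD p with h | h | h
  · have hnp : ¬ pPlusSingular D p := by
      rintro ⟨a, b⟩
      obtain ⟨c, d, e⟩ := h
      omega
    have hnm : ¬ pMinusSingular D p := by
      rintro ⟨a, b, c⟩
      obtain ⟨d, e, f⟩ := h
      omega
    exact Or.inl ⟨by simp [bsign, hnp, hnm], h⟩
  · exact Or.inr (Or.inl ⟨by simp [bsign, h], h⟩)
  · have hnp : ¬ pPlusSingular D p := by
      rintro ⟨a, b⟩
      obtain ⟨c, d, e⟩ := h
      omega
    exact Or.inr (Or.inr ⟨by simp [bsign, hnp, h], h⟩)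

set_option maxHeartbeats 4000000 in
/-- If D₁, D₁', D₂, D₂' are dimension types with D₁ ≤ D₁' and
D₂ ≤ D₂', then D₁ ⊞ D₂ ≤ D₁' ⊞ D₂'. -/
theorem boxplus_mono (D₁ D₁' D₂ D₂' : Bock → ℕ)
    (h₁ : DimensionType D₁) (h₁' : DimensionType D₁')
    (h₂ : DimensionType D₂) (h₂' : DimensionType D₂')
    (le₁ : dle D₁ D₁') (le₂ : dle D₂ D₂') :
    dle (boxplus D₁ D₂) (boxplus D₁' D₂') := by
  intro G
  cases G with
  | Q => exact Nat.add_le_add (le₁ .Q) (le₂ .Q)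
  | Zp p => exact Nat.add_le_add (le₁ (.Zp p)) (le₂ (.Zp p))
  | ZpInf p | Zloc p =>
    have lQ1 := le₁ .Q
    have lQ2 := le₂ .Q
    have lZ1 := le₁ (.Zp p)
    have lZ2 := le₂ (.Zp p)
    have lI1 := le₁ (.ZpInf p)
    have lI2 := le₂ (.ZpInf p)
    have lL1 := le₁ (.Zloc p)
    have lL2 := le₂ (.Zloc p)
    rcases bsign_spec D₁ h₁ p with ⟨hb, h⟩ | ⟨hb, h⟩ | ⟨hb, h⟩ <;>
    rcases bsign_spec D₂ h₂ p with ⟨hc, k⟩ | ⟨hc, k⟩ | ⟨hc, k⟩ <;>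
    rcases bsign_spec D₁' h₁' p with ⟨hb', h'⟩ | ⟨hb', h'⟩ | ⟨hb', h'⟩ <;>
    rcases bsign_spec D₂' h₂' p with ⟨hc', k'⟩ | ⟨hc', k'⟩ | ⟨hc', k'⟩ <;>
    simp only [boxplus, hb, hc, hb', hc', signMul] <;>
    norm_num <;> omega
end

section
/- For dimension types D and D', one has D ≤ D' if and only if D(ℚ) ≤ D'(ℚ) and e_p(D) ≤ e_p(D') for every prime p. (This is the paper's claim that the order of dimension types as functions on σ is equivalent to the order of their decorated values n⁻ < n < n⁺ < (n+1)⁻ < … at every prime together with the order of the ℚ-values.) -/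
/-- The decorated value e_p(D): 3*D(Z_p) if D is p-regular,
3*D(Z_p) + 1 if D is p+-singular, 3*D(Z_p) - 1 if D is p--singular. -/
def ep (D : Bock → ℕ) (p : Nat.Primes) : ℕ :=
  if pPlusSingular D p then 3 * D (.Zp p) + 1
  else if pMinusSingular D p then 3 * D (.Zp p) - 1
  else 3 * D (.Zp p)

lemma key_decorated (D D' : Bock → ℕ) (p : Nat.Primes)
    (h : pRegular D p ∨ pPlusSingular D p ∨ pMinusSingular D p)
    (h' : pRegular D' p ∨ pPlusSingular D' p ∨ pMinusSingular D' p)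
    (hq : D .Q ≤ D' .Q) :
    (D (.Zp p) ≤ D' (.Zp p) ∧ D (.ZpInf p) ≤ D' (.ZpInf p) ∧
      D (.Zloc p) ≤ D' (.Zloc p)) ↔ ep D p ≤ ep D' p := by
  rcases h with h | h | h <;> rcases h' with h' | h' | h' <;>
    (unfold ep; split_ifs <;>
      (simp only [pRegular, pPlusSingular, pMinusSingular] at *; omega))

/-- For dimension types D and D', one has D ≤ D' iff
D(ℚ) ≤ D'(ℚ) and e_p(D) ≤ e_p(D') for every prime p. -/
theorem dle_iff_decorated (D D' : Bock → ℕ)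
    (hD : DimensionType D) (hD' : DimensionType D') :
    dle D D' ↔ (D .Q ≤ D' .Q ∧ ∀ p : Nat.Primes, ep D p ≤ ep D' p) := by
  constructor
  · intro hle
    exact ⟨hle .Q, fun p => (key_decorated D D' p (hD p) (hD' p) (hle .Q)).mp
      ⟨hle _, hle _, hle _⟩⟩
  · rintro ⟨hq, he⟩ G
    cases G with
    | Q => exact hq
    | Zp p => exact ((key_decorated D D' p (hD p) (hD' p) hq).mpr (he p)).1
    | ZpInf p => exact ((key_decorated D D' p (hD p) (hD' p) hq).mpr (he p)).2.1
    | Zloc p => exact ((key_decorated D D' p (hD p) (hD' p) hq).mpr (he p)).2.2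
end

section
/- For every n ≥ 6, with D₁ and D₂ the specific dimension types defined in the context, one has B_n = D₁ ⊕ D₂ + 1 (equality of functions on σ). (This is the identity used in the proof of the main theorem that every finite dimensional Boltyanskii compactum of dimension ≥ 6 admits a dimensionally exotic map.) -/
/-- The function B_n: B_n(ℚ) = B_n(ℤ_p) = B_n(ℤ_{p^∞}) = n − 1 and
B_n(ℤ_{(p)}) = n for every prime p. -/
def Bolt (n : ℕ) : Bock → ℕ := fun G =>
  match G with
  | .Zloc _ => n
  | _ => n - 1


/-- The dimension type D₁: D₁(ℚ) = 2, D₁(ℤ_p) = 3, D₁(ℤ_{p^∞}) = 2,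
D₁(ℤ_{(p)}) = 3 for every prime p (p⁻-singular at every prime). -/
def Dex₁ : Bock → ℕ := fun G =>
  match G with
  | .Q => 2
  | .Zp _ => 3
  | .ZpInf _ => 2
  | .Zloc _ => 3

/-- The dimension type D₂: D₂(ℚ) = n − 4, D₂(ℤ_p) = D₂(ℤ_{p^∞}) = n − 5,
D₂(ℤ_{(p)}) = n − 4 for every prime p (p⁺-singular at every prime). -/
def Dex₂ (n : ℕ) : Bock → ℕ := fun G =>
  match G with
  | .Q => n - 4
  | .Zp _ => n - 5
  | .ZpInf _ => n - 5
  | .Zloc _ => n - 4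

lemma notPlus₁ (p : Nat.Primes) : ¬ pPlusSingular Dex₁ p := by
  intro h
  have : (2 : ℕ) = 3 := h.1
  omega

lemma minus₁ (p : Nat.Primes) : pMinusSingular Dex₁ p :=
  ⟨by show (1:ℕ) ≤ 3; omega, by show (2:ℕ) = 3 - 1; rfl,
   by show (3:ℕ) = max 2 (2 + 1); rfl⟩

lemma plus₂ (n : ℕ) (hn : 6 ≤ n) (p : Nat.Primes) : pPlusSingular (Dex₂ n) p := by
  refine ⟨rfl, ?_⟩
  show n - 4 = max (n - 4) (n - 5 + 1)
  rw [Nat.max_def]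
  split_ifs <;> omega

lemma dual_Dex₁ : dual Dex₁ = fun G =>
    match G with
    | .Q => 2 | .Zp _ => 3 | .ZpInf _ => 3 | .Zloc _ => 4 := by
  funext G
  cases G with
  | Q => rfl
  | Zp p => rfl
  | ZpInf p =>
      simp only [dual]
      rw [if_neg (notPlus₁ p), if_pos (minus₁ p)]
      rfl
  | Zloc p =>
      simp only [dual]
      rw [if_neg (notPlus₁ p), if_pos (minus₁ p)]
      rfl

lemma dual_Dex₂ (n : ℕ) (hn : 6 ≤ n) : dual (Dex₂ n) = fun G =>
    match G with
    | .Q => n - 4 | .Zp _ => n - 5 | .ZpInf _ => n - 6 | .Zloc _ => n - 4 := by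
  funext G
  cases G with
  | Q => rfl
  | Zp p => rfl
  | ZpInf p =>
      simp only [dual]
      rw [if_pos (plus₂ n hn p)]
      show n - 5 - 1 = n - 6
      omega
  | Zloc p =>
      simp only [dual]
      rw [if_pos (plus₂ n hn p)]
      show max (n - 4) (n - 5) = n - 4
      rw [Nat.max_def]; split_ifs <;> omega

lemma bsign_dual_Dex₁ (p : Nat.Primes) : bsign (dual Dex₁) p = 1 := by
  rw [bsign, if_pos]
  rw [dual_Dex₁]
  exact ⟨rfl, rfl⟩

lemma bsign_dual_Dex₂ (n : ℕ) (hn : 6 ≤ n) (p : Nat.Primes) :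
    bsign (dual (Dex₂ n)) p = -1 := by
  have h1 : ¬ pPlusSingular (dual (Dex₂ n)) p := by
    rw [dual_Dex₂ n hn]
    intro h
    have := h.1
    change n - 6 = n - 5 at this
    omega
  have h2 : pMinusSingular (dual (Dex₂ n)) p := by
    rw [dual_Dex₂ n hn]
    refine ⟨?_, ?_, ?_⟩
    · show 1 ≤ n - 5; omega
    · show n - 6 = n - 5 - 1; omega
    · show n - 4 = max (n - 4) (n - 6 + 1)
      rw [Nat.max_def]; split_ifs <;> omega
  rw [bsign, if_neg h1, if_pos h2]

lemma boxplus_duals (n : ℕ) (hn : 6 ≤ n) :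
    boxplus (dual Dex₁) (dual (Dex₂ n)) = fun G =>
      match G with
      | .Q => n - 2 | .Zp _ => n - 2 | .ZpInf _ => n - 3 | .Zloc _ => n - 2 := by
  funext G
  cases G with
  | Q =>
      show dual Dex₁ Bock.Q + dual (Dex₂ n) Bock.Q = n - 2
      rw [dual_Dex₁, dual_Dex₂ n hn]
      show 2 + (n - 4) = n - 2; omega
  | Zp p =>
      show dual Dex₁ (Bock.Zp p) + dual (Dex₂ n) (Bock.Zp p) = n - 2
      rw [dual_Dex₁, dual_Dex₂ n hn]
      show 3 + (n - 5) = n - 2; omega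
  | ZpInf p =>
      simp only [boxplus, bsign_dual_Dex₁ p, bsign_dual_Dex₂ n hn p, signMul]
      norm_num
      rw [dual_Dex₁, dual_Dex₂ n hn]
      show 3 + (n - 5) - 1 = n - 3; omega
  | Zloc p =>
      simp only [boxplus, bsign_dual_Dex₁ p, bsign_dual_Dex₂ n hn p, signMul]
      norm_num
      rw [dual_Dex₁, dual_Dex₂ n hn]
      show max (2 + (n - 4)) (3 + (n - 5)) = n - 2
      rw [Nat.max_def]; split_ifs <;> omega

lemma dual_boxplus_duals (n : ℕ) (hn : 6 ≤ n) :
    dual (boxplus (dual Dex₁) (dual (Dex₂ n))) = fun G =>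
      match G with
      | .Zloc _ => n - 1
      | _ => n - 2 := by
  rw [boxplus_duals n hn]
  set E : Bock → ℕ := fun G =>
      match G with
      | .Q => n - 2 | .Zp _ => n - 2 | .ZpInf _ => n - 3 | .Zloc _ => n - 2
    with hE
  have hnp : ∀ p, ¬ pPlusSingular E p := by
    intro p h
    have := h.1
    change n - 3 = n - 2 at this
    omega
  have hm : ∀ p, pMinusSingular E p := by
    intro p
    refine ⟨?_, ?_, ?_⟩
    · show 1 ≤ n - 2; omega
    · show n - 3 = n - 2 - 1; omega
    · show n - 2 = max (n - 2) (n - 3 + 1)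
      rw [Nat.max_def]; split_ifs <;> omega
  funext G
  cases G with
  | Q => rfl
  | Zp p => rfl
  | ZpInf p =>
      simp only [dual]
      rw [if_neg (hnp p), if_pos (hm p)]
  | Zloc p =>
      simp only [dual]
      rw [if_neg (hnp p), if_pos (hm p)]
      show max (n - 2) (n - 2 + 1) = n - 1
      rw [Nat.max_def]; split_ifs <;> omega

/-- For every n ≥ 6, one has B_n = D₁ ⊕ D₂ + 1 (equality of
functions on σ). -/
theorem bolt_eq_oplus_add_one (n : ℕ) (hn : 6 ≤ n) :
    Bolt n = fun G => oplus Dex₁ (Dex₂ n) G + 1 := by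
  funext G
  show Bolt n G = dual (boxplus (dual Dex₁) (dual (Dex₂ n))) G + 1
  rw [dual_boxplus_duals n hn]
  cases G with
  | Q => show n - 1 = n - 2 + 1; omega
  | Zp p => show n - 1 = n - 2 + 1; omega
  | ZpInf p => show n - 1 = n - 2 + 1; omega
  | Zloc p => show n = n - 1 + 1; omega
end

section
/- Let D be a dimension type with D(ℚ) ≤ 3 and D(G) ≤ 4 for every G ∈ σ. Then D ≤ E, where E : σ → ℕ is the dimension type with E(ℚ) = 3 and, for every prime p, E(ℤ_p) = 4, E(ℤ_{p^∞}) = 3, E(ℤ_{(p)}) = 4 (E is p⁻-singular at every prime). (This is the step in the proof of the main theorem asserting that dim_ℚ Y ≤ 3 together with dim Y ≤ 4 implies d_Y(p) ≤ 4⁻ for all primes p, i.e. d_Y ≤ D₁ + 1.) -/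
/-- The dimension type E: E(ℚ) = 3, E(ℤ_p) = 4, E(ℤ_{p^∞}) = 3,
E(ℤ_{(p)}) = 4 for every prime p (p⁻-singular at every prime). -/
def Eex : Bock → ℕ := fun G =>
  match G with
  | .Q => 3
  | .Zp _ => 4
  | .ZpInf _ => 3
  | .Zloc _ => 4

/-- Let D be a dimension type with D(ℚ) ≤ 3 and D(G) ≤ 4 for
every G ∈ σ. Then D ≤ E. -/
theorem le_four_minus (D : Bock → ℕ) (hD : DimensionType D)
    (hQ : D .Q ≤ 3) (h4 : ∀ G, D G ≤ 4) :
    dle D Eex := by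
  intro G
  cases G with
  | Q => exact hQ
  | Zp p => exact h4 _
  | Zloc p => exact h4 _
  | ZpInf p =>
    rcases hD p with ⟨_, _, h⟩ | ⟨_, h⟩ | ⟨h1, h2, _⟩
    · simp only [Eex]; omega
    · have := h4 (.Zloc p); simp only [Eex] at *; omega
    · have := h4 (.Zp p); simp only [Eex] at *; omega
end
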